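/- Let E be an uncountable Polish space and W ⊆ E† an open symmetric set, where E† = (E × E) \ diagonal. Then there is a Cantor set (nonempty perfect compact subset homeomorphic to 2^ω) Q ⊆ E which is either W-free (Q† ∩ W = ∅) or W-connected (Q† ⊆ W). -/

import Mathlib

open Set Metric Topology Filter

section Galvin

variable {E : Type*}

/-- A set is `GFree` if no two of its points are `W`-related. -/
def GFree (W : Set (E × E)) (T : Set E) : Prop := ∀ x ∈ T, ∀ y ∈ T, (x, y) ∉ W

/-- A set is `GSigmaFree` if it is covered by countably many `GFree` sets. -/
def GSigmaFree (W : Set (E × E)) (A : Set E) : Prop :=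
  ∃ F : Set (Set E), F.Countable ∧ (∀ T ∈ F, GFree W T) ∧ A ⊆ ⋃₀ F

lemma GSigmaFree.mono {W : Set (E × E)} {A B : Set E} (h : GSigmaFree W B) (hAB : A ⊆ B) :
    GSigmaFree W A := by
  obtain ⟨F, hc, hfree, hsub⟩ := h
  exact ⟨F, hc, hfree, hAB.trans hsub⟩

lemma gSigmaFree_sUnion {W : Set (E × E)} {F : Set (Set E)} (hc : F.Countable)
    (h : ∀ A ∈ F, GSigmaFree W A) : GSigmaFree W (⋃₀ F) := by
  classical
  choose! G hGc hGfree hGsub using h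
  refine ⟨⋃ A ∈ F, G A, hc.biUnion hGc, ?_, ?_⟩
  · rintro T hT
    simp only [mem_iUnion] at hT
    obtain ⟨A, hA, hT⟩ := hT
    exact hGfree A hA T hT
  · rintro x ⟨A, hA, hx⟩
    obtain ⟨T, hT, hxT⟩ := hGsub A hA hx
    exact ⟨T, mem_iUnion.2 ⟨A, mem_iUnion.2 ⟨hA, hT⟩⟩, hxT⟩

lemma nonempty_of_not_gSigmaFree {W : Set (E × E)} {A : Set E} (h : ¬ GSigmaFree W A) :
    A.Nonempty := by
  rcases A.eq_empty_or_nonempty with rfl | hA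
  · exact absurd ⟨∅, countable_empty, by simp, by simp⟩ h
  · exact hA

lemma gFree_closure [TopologicalSpace E] {W : Set (E × E)} (hWopen : IsOpen W)
    {T : Set E} (h : GFree W T) : GFree W (closure T) := by
  intro a ha b hb hab
  obtain ⟨u, v, huo, hvo, hau, hbv, huv⟩ := isOpen_prod_iff.mp hWopen a b hab
  obtain ⟨a', ha'u, ha'T⟩ := mem_closure_iff.mp ha u huo hau
  obtain ⟨b', hb'v, hb'T⟩ := mem_closure_iff.mp hb v hvo hbv
  exact h a' ha'T b' hb'T (huv ⟨ha'u, hb'v⟩)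

/-- The predicate describing a good pair of children sets in the Cantor scheme. -/
def GoodPair (W : Set (E × E)) [MetricSpace E] (U : Set E) (ε : ℝ) (p : Set E × Set E) : Prop :=
  IsOpen p.1 ∧ IsOpen p.2 ∧ ¬ GSigmaFree W p.1 ∧ ¬ GSigmaFree W p.2 ∧
    closure p.1 ⊆ U ∧ closure p.2 ⊆ U ∧
    (∀ a ∈ closure p.1, ∀ b ∈ closure p.1, dist a b ≤ ε) ∧
    (∀ a ∈ closure p.2, ∀ b ∈ closure p.2, dist a b ≤ ε) ∧
    p.1 ×ˢ p.2 ⊆ W ∧ p.2 ×ˢ p.1 ⊆ W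

/-- The key splitting step: inside any open non-σ-free set, one can find two `W`-related small
open non-σ-free subsets. -/
lemma galvin_step [MetricSpace E] [SecondCountableTopology E]
    {W : Set (E × E)} (hWopen : IsOpen W) (hWsymm : ∀ x y : E, (x, y) ∈ W → (y, x) ∈ W)
    (U : Set E) (hUo : IsOpen U) (hUL : ¬ GSigmaFree W U) {ε : ℝ} (hε : 0 < ε) :
    ∃ p : Set E × Set E, GoodPair W U ε p := by
  classical
  -- the "small" open subsets of U
  set S : Set (Set E) := {V | IsOpen V ∧ V ⊆ U ∧ GSigmaFree W V} with hS
  obtain ⟨T, hTc, hTS, hTU⟩ := TopologicalSpace.isOpen_sUnion_countable S (fun s hs => hs.1)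
  have hSsf : GSigmaFree W (⋃₀ S) := by
    rw [← hTU]
    exact gSigmaFree_sUnion hTc (fun A hA => (hTS hA).2.2)
  -- Z is the set of points of U not covered by small open sets
  set Z : Set E := U \ ⋃₀ S with hZ
  have hZnotfree : ¬ GFree W Z := by
    intro hfree
    apply hUL
    have : GSigmaFree W (Z ∪ ⋃₀ S) := by
      obtain ⟨F, hc, hfr, hsub⟩ := hSsf
      exact ⟨insert Z F, hc.insert _, by
        rintro T (rfl | hT)
        exacts [hfree, hfr T hT], by
        rintro x (hx | hx)
        · exact ⟨Z, mem_insert _ _, hx⟩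
        · obtain ⟨T, hT, hxT⟩ := hsub hx
          exact ⟨T, mem_insert_of_mem _ hT, hxT⟩⟩
    exact this.mono (fun x hx => by
      by_cases h : x ∈ ⋃₀ S
      · exact Or.inr h
      · exact Or.inl ⟨hx, h⟩)
  -- obtain two W-related points of Z
  simp only [GFree, not_forall] at hZnotfree
  obtain ⟨x, hxZ, y, hyZ, hxy⟩ := hZnotfree
  rw [not_not] at hxy
  -- open rectangles inside W
  obtain ⟨u, v, huo, hvo, hxu, hyv, huv⟩ := isOpen_prod_iff.mp hWopen x y hxy
  -- radii
  obtain ⟨rx, hrx, hrxsub⟩ := Metric.isOpen_iff.mp (hUo.inter huo) x ⟨hxZ.1, hxu⟩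
  obtain ⟨ry, hry, hrysub⟩ := Metric.isOpen_iff.mp (hUo.inter hvo) y ⟨hyZ.1, hyv⟩
  set r₁ : ℝ := min (rx / 2) (ε / 2) with hr₁def
  set r₂ : ℝ := min (ry / 2) (ε / 2) with hr₂def
  have hr₁ : 0 < r₁ := lt_min (by linarith) (by linarith)
  have hr₂ : 0 < r₂ := lt_min (by linarith) (by linarith)
  have hcb₁ : closure (ball x r₁) ⊆ U ∩ u := by
    refine (closure_ball_subset_closedBall).trans ?_
    refine (closedBall_subset_ball ?_).trans hrxsub
    calc r₁ ≤ rx / 2 := min_le_left _ _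
      _ < rx := by linarith
  have hcb₂ : closure (ball y r₂) ⊆ U ∩ v := by
    refine (closure_ball_subset_closedBall).trans ?_
    refine (closedBall_subset_ball ?_).trans hrysub
    calc r₂ ≤ ry / 2 := min_le_left _ _
      _ < ry := by linarith
  -- largeness of the two balls
  have hlarge : ∀ z : E, z ∈ Z → ∀ V : Set E, IsOpen V → z ∈ V → V ⊆ U → ¬ GSigmaFree W V := by
    intro z hz V hVo hzV hVU hVsf
    exact hz.2 ⟨V, ⟨hVo, hVU, hVsf⟩, hzV⟩
  refine ⟨(ball x r₁, ball y r₂), isOpen_ball, isOpen_ball,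
    hlarge x hxZ _ isOpen_ball (mem_ball_self hr₁)
      (((subset_closure.trans hcb₁)).trans inter_subset_left),
    hlarge y hyZ _ isOpen_ball (mem_ball_self hr₂)
      (((subset_closure.trans hcb₂)).trans inter_subset_left),
    hcb₁.trans inter_subset_left, hcb₂.trans inter_subset_left, ?_, ?_, ?_, ?_⟩
  · intro a ha b hb
    have ha' := closure_ball_subset_closedBall ha
    have hb' := closure_ball_subset_closedBall hb
    calc dist a b ≤ dist a x + dist x b := dist_triangle _ _ _
      _ ≤ r₁ + r₁ := add_le_add ha' (by rw [dist_comm]; exact hb')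
      _ ≤ ε / 2 + ε / 2 := add_le_add (min_le_right _ _) (min_le_right _ _)
      _ = ε := by ring
  · intro a ha b hb
    have ha' := closure_ball_subset_closedBall ha
    have hb' := closure_ball_subset_closedBall hb
    calc dist a b ≤ dist a y + dist y b := dist_triangle _ _ _
      _ ≤ r₂ + r₂ := add_le_add ha' (by rw [dist_comm]; exact hb')
      _ ≤ ε / 2 + ε / 2 := add_le_add (min_le_right _ _) (min_le_right _ _)
      _ = ε := by ring
  · rintro ⟨a, b⟩ ⟨ha, hb⟩
    exact huv ⟨(hcb₁ (subset_closure ha)).2, (hcb₂ (subset_closure hb)).2⟩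
  · rintro ⟨b, a⟩ ⟨hb, ha⟩
    exact hWsymm a b (huv ⟨(hcb₁ (subset_closure ha)).2, (hcb₂ (subset_closure hb)).2⟩)

/-- From a continuous injection of Cantor space we obtain all the structural properties of `Q`. -/
lemma cantor_pack {E : Type*} [TopologicalSpace E] [T2Space E]
    (f : (ℕ → Bool) → E) (hf : Continuous f) (hinj : Function.Injective f) :
    (Set.range f).Nonempty ∧ IsCompact (Set.range f) ∧ Perfect (Set.range f) ∧
      Nonempty ((Set.range f) ≃ₜ (ℕ → Bool)) := by
  refine ⟨⟨f (fun _ => false), mem_range_self _⟩, isCompact_range hf, ?_, ?_⟩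
  · constructor
    · exact (isCompact_range hf).isClosed
    · rintro x ⟨a, rfl⟩
      rw [accPt_iff_nhds]
      intro U hU
      have hpre : f ⁻¹' U ∈ 𝓝 a := hf.continuousAt hU
      rw [nhds_pi, Filter.mem_pi] at hpre
      obtain ⟨I, hIfin, t, ht, htsub⟩ := hpre
      obtain ⟨n, hn⟩ := hIfin.infinite_compl.nonempty
      set b : ℕ → Bool := Function.update a n (!(a n)) with hb
      have hbI : b ∈ I.pi t := by
        intro i hi
        have : i ≠ n := fun h => hn (h ▸ hi)
        rw [hb, Function.update_of_ne this]
        exact mem_of_mem_nhds (ht i)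
      have hba : b ≠ a := by
        intro h
        have := congrFun h n
        rw [hb, Function.update_self] at this
        simp at this
      exact ⟨f b, ⟨htsub hbI, mem_range_self _⟩, fun h => hba (hinj h)⟩
  · exact ⟨(hf.isClosedEmbedding hinj).toIsEmbedding.toHomeomorph.symm⟩

/-- The connected case of Galvin's theorem: if the space is not σ-`W`-free then there is a
continuous injection of Cantor space whose distinct values are all `W`-related. -/
lemma galvin_connected [MetricSpace E] [CompleteSpace E] [SecondCountableTopology E]
    {W : Set (E × E)} (hWsub : W ⊆ {p : E × E | p.1 ≠ p.2})
    (hWopen : IsOpen W) (hWsymm : ∀ x y : E, (x, y) ∈ W → (y, x) ∈ W)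
    (hLarge : ¬ GSigmaFree W (Set.univ : Set E)) :
    ∃ f : (ℕ → Bool) → E, Continuous f ∧ Function.Injective f ∧
      ∀ x y : ℕ → Bool, x ≠ y → (f x, f y) ∈ W := by
  classical
  have hstep : ∀ (U : Set E) (n : ℕ), IsOpen U → ¬ GSigmaFree W U →
      ∃ p : Set E × Set E, GoodPair W U ((1/2 : ℝ)^n) p :=
    fun U n h1 h2 => galvin_step hWopen hWsymm U h1 h2 (by positivity)
  choose! pair hpair using hstep
  -- the Cantor scheme, indexed by reversed binary strings
  set D : List Bool → Set E := fun s =>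
    s.rec ((pair Set.univ 0).1)
      (fun b t ih => if b then (pair ih (t.length + 1)).2 else (pair ih (t.length + 1)).1)
    with hDdef
  have hDnil : D [] = (pair Set.univ 0).1 := rfl
  have hDcons : ∀ (b : Bool) (t : List Bool),
      D (b :: t) = (if b then (pair (D t) (t.length + 1)).2 else (pair (D t) (t.length + 1)).1) :=
    fun _ _ => rfl
  -- basic invariant
  have inv : ∀ s : List Bool, IsOpen (D s) ∧ ¬ GSigmaFree W (D s) ∧
      ∀ a ∈ closure (D s), ∀ b ∈ closure (D s), dist a b ≤ (1/2 : ℝ)^s.length := by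
    intro s
    induction s with
    | nil =>
      obtain ⟨o1, _, L1, _, _, _, d1, _, _, _⟩ := hpair Set.univ 0 isOpen_univ hLarge
      exact ⟨o1, L1, by simpa using d1⟩
    | cons b t ih =>
      obtain ⟨o1, o2, L1, L2, c1, c2, d1, d2, _, _⟩ :=
        hpair (D t) (t.length + 1) ih.1 ih.2.1
      rw [hDcons]
      cases b
      · exact ⟨o1, L1, by simpa using d1⟩
      · exact ⟨o2, L2, by simpa using d2⟩
  have hsubparent : ∀ (b : Bool) (t : List Bool), closure (D (b :: t)) ⊆ D t := by
    intro b t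
    obtain ⟨_, _, _, _, c1, c2, _, _, _, _⟩ :=
      hpair (D t) (t.length + 1) (inv t).1 (inv t).2.1
    rw [hDcons]
    cases b
    · simpa using c1
    · simpa using c2
  have hcross : ∀ t : List Bool,
      D (false :: t) ×ˢ D (true :: t) ⊆ W ∧ D (true :: t) ×ˢ D (false :: t) ⊆ W := by
    intro t
    obtain ⟨_, _, _, _, _, _, _, _, w12, w21⟩ :=
      hpair (D t) (t.length + 1) (inv t).1 (inv t).2.1
    rw [hDcons, hDcons]
    simpa using ⟨w12, w21⟩
  -- distinct strings of equal length give W-related sets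
  have hpairW : ∀ s t : List Bool, s.length = t.length → s ≠ t → D s ×ˢ D t ⊆ W := by
    intro s
    induction s with
    | nil =>
      intro t hlen hne
      cases t with
      | nil => exact absurd rfl hne
      | cons c t' => simp at hlen
    | cons b s' ih =>
      intro t hlen hne
      cases t with
      | nil => simp at hlen
      | cons c t' =>
        have hlen' : s'.length = t'.length := by simpa using hlen
        by_cases h : s' = t'
        · subst h
          have hbc : b ≠ c := fun h => hne (by rw [h])
          cases b <;> cases c
          · exact absurd rfl hbc
          · exact (hcross s').1
          · exact (hcross s').2
          · exact absurd rfl hbc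
        · rintro ⟨a, a'⟩ ⟨ha, ha'⟩
          exact ih t' hlen' h
            ⟨hsubparent b s' (subset_closure ha), hsubparent c t' (subset_closure ha')⟩
  -- truncations
  set trunk : (ℕ → Bool) → ℕ → List Bool :=
    fun x n => Nat.rec [] (fun m l => x m :: l) n with htrunkdef
  have htrunkS : ∀ x n, trunk x (n+1) = x n :: trunk x n := fun _ _ => rfl
  have htrunklen : ∀ x n, (trunk x n).length = n := by
    intro x n
    induction n with
    | zero => rfl
    | succ m ih => rw [htrunkS]; simp [ih]
  have hchain : ∀ x (n m : ℕ), n ≤ m → D (trunk x m) ⊆ D (trunk x n) := by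
    intro x n m hnm
    induction m with
    | zero => rw [Nat.le_zero.mp hnm]
    | succ k ih =>
      rcases Nat.lt_or_ge n (k+1) with h | h
      · exact ((subset_closure.trans (hsubparent (x k) (trunk x k))).trans
          (ih (Nat.lt_succ_iff.mp h)))
      · rw [Nat.le_antisymm hnm h]
  have htrunkeq : ∀ x y (n : ℕ), (∀ i, i < n → x i = y i) → trunk x n = trunk y n := by
    intro x y n h
    induction n with
    | zero => rfl
    | succ m ih =>
      rw [htrunkS, htrunkS, h m (Nat.lt_succ_self m),
        ih (fun i hi => h i (hi.trans (Nat.lt_succ_self m)))]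
  have htrunkne : ∀ x y (k n : ℕ), k < n → x k ≠ y k → trunk x n ≠ trunk y n := by
    intro x y k n
    induction n with
    | zero => intro h; exact absurd h (Nat.not_lt_zero k)
    | succ m ih =>
      intro hk hxy heq
      rw [htrunkS, htrunkS] at heq
      rcases Nat.lt_succ_iff_lt_or_eq.mp hk with h | h
      · exact ih h hxy (by injection heq)
      · subst h
        exact hxy (by injection heq)
  -- choose points and limits
  have hne : ∀ s : List Bool, (D s).Nonempty :=
    fun s => nonempty_of_not_gSigmaFree (inv s).2.1
  choose pt hpt using hne
  set p : (ℕ → Bool) → ℕ → E := fun x n => pt (trunk x n) with hpdef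
  have hmemclp : ∀ x (n m : ℕ), n ≤ m → p x m ∈ closure (D (trunk x n)) :=
    fun x n m hnm => subset_closure (hchain x n m hnm (hpt _))
  have hcauchy : ∀ x, CauchySeq (p x) := by
    intro x
    refine cauchySeq_of_le_geometric (1/2 : ℝ) 1 (by norm_num) (fun n => ?_)
    rw [one_mul]
    have h1 := hmemclp x n n le_rfl
    have h2 := hmemclp x n (n+1) (Nat.le_succ n)
    have := (inv (trunk x n)).2.2 _ h1 _ h2
    rwa [htrunklen] at this
  choose f hf using fun x => cauchySeq_tendsto_of_complete (hcauchy x)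
  have hmemcl : ∀ x (n : ℕ), f x ∈ closure (D (trunk x n)) := by
    intro x n
    refine isClosed_closure.mem_of_tendsto (hf x)
      (eventually_atTop.2 ⟨n, fun m hm => hmemclp x n m hm⟩)
  have hmem : ∀ x (n : ℕ), f x ∈ D (trunk x n) :=
    fun x n => hsubparent (x n) (trunk x n) (hmemcl x (n+1))
  have hW' : ∀ x y : ℕ → Bool, x ≠ y → (f x, f y) ∈ W := by
    intro x y hxy
    obtain ⟨k, hk⟩ := Function.ne_iff.mp hxy
    exact hpairW (trunk x (k+1)) (trunk y (k+1))
      ((htrunklen x (k+1)).trans (htrunklen y (k+1)).symm)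
      (htrunkne x y k (k+1) (Nat.lt_succ_self k) hk)
      ⟨hmem x (k+1), hmem y (k+1)⟩
  have hinj : Function.Injective f := by
    intro x y h
    by_contra hne
    have := hW' x y hne
    rw [h] at this
    exact hWsub this rfl
  refine ⟨f, ?_, hinj, hW'⟩
  rw [continuous_iff_continuousAt]
  intro x
  rw [ContinuousAt, Metric.tendsto_nhds]
  intro ε hε
  obtain ⟨n, hn⟩ := exists_pow_lt_of_lt_one hε (by norm_num : (1/2 : ℝ) < 1)
  have hopen : IsOpen {y : ℕ → Bool | ∀ i < n, y i = x i} := by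
    have : {y : ℕ → Bool | ∀ i < n, y i = x i}
        = ⋂ i ∈ Finset.range n, (fun y : ℕ → Bool => y i) ⁻¹' {x i} := by
      ext y; simp
    rw [this]
    exact isOpen_biInter_finset fun i _ =>
      (continuous_apply i).isOpen_preimage _ (isOpen_discrete _)
  filter_upwards [hopen.mem_nhds (by simp)] with y hy
  have heq : trunk y n = trunk x n := htrunkeq y x n hy
  have h1 : f y ∈ closure (D (trunk x n)) := heq ▸ hmemcl y n
  have h2 := (inv (trunk x n)).2.2 _ h1 _ (hmemcl x n)
  rw [htrunklen] at h2
  exact lt_of_le_of_lt h2 hn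

end Galvin

theorem stmt_6 (E : Type*) [TopologicalSpace E] [PolishSpace E]
    (hE : ¬ (Set.univ : Set E).Countable)
    (W : Set (E × E)) (hWsub : W ⊆ {p : E × E | p.1 ≠ p.2})
    (hWopen : IsOpen W) (hWsymm : ∀ x y : E, (x, y) ∈ W → (y, x) ∈ W) :
    ∃ Q : Set E, Q.Nonempty ∧ IsCompact Q ∧ Perfect Q ∧
      Nonempty (Q ≃ₜ (ℕ → Bool)) ∧
      ((∀ x ∈ Q, ∀ y ∈ Q, x ≠ y → (x, y) ∉ W) ∨
       (∀ x ∈ Q, ∀ y ∈ Q, x ≠ y → (x, y) ∈ W)) := by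
  classical
  by_cases hcase : GSigmaFree W (Set.univ : Set E)
  · -- there is an uncountable free set, yielding a W-free Cantor set
    obtain ⟨F, hFc, hFfree, hFsub⟩ := hcase
    have hex : ∃ T ∈ F, ¬ T.Countable := by
      by_contra h
      push_neg at h
      exact hE ((hFc.sUnion h).mono hFsub)
    obtain ⟨T, hTF, hTunc⟩ := hex
    have hclfree : GFree W (closure T) := gFree_closure hWopen (hFfree T hTF)
    have hclunc : ¬ (closure T).Countable := fun h => hTunc (h.mono subset_closure)
    obtain ⟨f, hrange, hcont, hinj⟩ :=
      isClosed_closure.exists_nat_bool_injection_of_not_countable hclunc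
    obtain ⟨h1, h2, h3, h4⟩ := cantor_pack f hcont hinj
    refine ⟨Set.range f, h1, h2, h3, h4, Or.inl ?_⟩
    intro x hx y hy _ hxy
    exact hclfree x (hrange hx) y (hrange hy) hxy
  · -- otherwise build a W-connected Cantor set
    letI := TopologicalSpace.upgradeIsCompletelyMetrizable E
    obtain ⟨f, hcont, hinj, hW⟩ := galvin_connected hWsub hWopen hWsymm hcase
    obtain ⟨h1, h2, h3, h4⟩ := cantor_pack f hcont hinj
    refine ⟨Set.range f, h1, h2, h3, h4, Or.inr ?_⟩
    rintro x ⟨a, rfl⟩ y ⟨b, rfl⟩ hxy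
    exact hW a b (fun h => hxy (by rw [h]))
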